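/- For every y ∈ ℝ and every u with 0 ≤ u < 1, the series ∑_{a=0}^{∞} He_a(y)²·u^a / a! converges and equals (1 − u²)^{−1/2} · exp(u·y² / (1 + u)). -/

import Mathlib

open scoped BigOperators

/-- Probabilists' Hermite polynomials: `He 0 = 1`, `He 1 = id`,
`He (a+1) x = x * He a x - a * He (a-1) x`. -/
noncomputable def He : ℕ → ℝ → ℝ
  | 0, _ => 1
  | 1, x => x
  | (n + 2), x => x * He (n + 1) x - ((n : ℝ) + 1) * He n x

open MeasureTheory Complex Real Filter Set


lemma intQuad {b : ℝ} (hb : b < 0) (c : ℝ) :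
    Integrable fun z : ℝ => Real.exp (b * z ^ 2 + c * z) := by
  have hb' : (b : ℂ).re < 0 := by simpa using hb
  have H := (integrable_cexp_quadratic' hb' (c : ℂ) 0).norm
  refine H.congr (Eventually.of_forall fun z => ?_)
  have h2 : (↑b * ↑z ^ 2 + ↑c * ↑z + 0 : ℂ) = ((b * z ^ 2 + c * z : ℝ) : ℂ) := by
    push_cast; ring
  simp only [Complex.norm_exp, h2, Complex.ofReal_re]

lemma intQuadAbs {b : ℝ} (hb : b < 0) (c : ℝ) :
    Integrable fun z : ℝ => Real.exp (b * z ^ 2 + c * |z|) := by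
  have h1 := (intQuad hb c).add (intQuad hb (-c))
  refine h1.mono' ?_ (Eventually.of_forall fun z => ?_)
  · exact (Real.continuous_exp.comp (by continuity)).aestronglyMeasurable
  · rw [Real.norm_eq_abs, _root_.abs_of_nonneg (Real.exp_pos _).le]
    simp only [Pi.add_apply]
    rcases abs_cases z with ⟨h, _⟩ | ⟨h, _⟩
    · rw [h]; linarith [Real.exp_pos (b * z ^ 2 + -c * z)]
    · rw [h]
      have h2 : b * z ^ 2 + c * -z = b * z ^ 2 + -c * z := by ring
      rw [h2]
      linarith [Real.exp_pos (b * z ^ 2 + c * z)]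

lemma powFactBound {k : ℕ} {x : ℝ} (hx : 0 ≤ x) : x ^ k ≤ (k.factorial : ℝ) * Real.exp x := by
  have h := Real.pow_div_factorial_le_exp x hx k
  have hk : (0:ℝ) < k.factorial := by positivity
  rw [div_le_iff₀ hk] at h
  linarith [h]

lemma intPow (k : ℕ) {c : ℝ} (hc : 0 ≤ c) :
    Integrable fun z : ℝ => (c + |z|) ^ k * Real.exp (-z ^ 2 / 2) := by
  have h1 := (intQuadAbs (b := -(1/2)) (by norm_num) 1).const_mul
    ((k.factorial : ℝ) * Real.exp c)
  refine h1.mono' ?_ (Eventually.of_forall fun z => ?_)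
  · exact (Continuous.mul (by continuity) (Real.continuous_exp.comp (by continuity))).aestronglyMeasurable
  · have hnn : (0:ℝ) ≤ (c + |z|) ^ k * Real.exp (-z ^ 2 / 2) := by positivity
    rw [Real.norm_eq_abs, _root_.abs_of_nonneg hnn]
    have hb := powFactBound (k := k) (x := c + |z|) (by positivity)
    have he : Real.exp (c + |z|) * Real.exp (-z ^ 2 / 2)
        = Real.exp c * Real.exp (-(1/2) * z ^ 2 + 1 * |z|) := by
      rw [← Real.exp_add, ← Real.exp_add]; ring_nf
    calc (c + |z|) ^ k * Real.exp (-z ^ 2 / 2)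
        ≤ ((k.factorial : ℝ) * Real.exp (c + |z|)) * Real.exp (-z ^ 2 / 2) := by
          exact mul_le_mul_of_nonneg_right hb (Real.exp_pos _).le
      _ = (k.factorial : ℝ) * Real.exp c * Real.exp (-(1/2) * z ^ 2 + 1 * |z|) := by
          rw [mul_assoc, he]; ring

lemma tendPowTop (k : ℕ) {c : ℝ} (hc : 0 ≤ c) :
    Tendsto (fun z : ℝ => (c + |z|) ^ k * Real.exp (-z ^ 2 / 2)) atTop (nhds 0) := by
  have hg : Tendsto (fun z : ℝ => -(z - 1) ^ 2 / 2) atTop atBot := by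
    apply tendsto_atBot_mono' _ _ tendsto_neg_atTop_atBot
    filter_upwards [eventually_ge_atTop (4:ℝ)] with z hz
    nlinarith
  have hg2 : Tendsto (fun z : ℝ =>
      ((k.factorial : ℝ) * Real.exp (c + 1/2)) * Real.exp (-(z - 1) ^ 2 / 2)) atTop (nhds 0) := by
    have := (Real.tendsto_exp_atBot.comp hg)
    simpa using this.const_mul ((k.factorial : ℝ) * Real.exp (c + 1/2))
  refine squeeze_zero' ?_ ?_ hg2
  · exact Eventually.of_forall fun z => by positivity
  · filter_upwards [eventually_ge_atTop (0:ℝ)] with z hz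
    have habs : |z| = z := abs_of_nonneg hz
    have hb := powFactBound (k := k) (x := c + |z|) (by positivity)
    have : Real.exp (c + |z|) * Real.exp (-z ^ 2 / 2)
        = Real.exp (c + 1/2) * Real.exp (-(z - 1) ^ 2 / 2) := by
      rw [← Real.exp_add, ← Real.exp_add, habs]; ring_nf
    calc (c + |z|) ^ k * Real.exp (-z ^ 2 / 2)
        ≤ ((k.factorial : ℝ) * Real.exp (c + |z|)) * Real.exp (-z ^ 2 / 2) :=
          mul_le_mul_of_nonneg_right hb (Real.exp_pos _).le
      _ = (k.factorial : ℝ) * Real.exp (c + 1/2) * Real.exp (-(z - 1) ^ 2 / 2) := by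
          rw [mul_assoc, this]; ring

lemma tendPowBot (k : ℕ) {c : ℝ} (hc : 0 ≤ c) :
    Tendsto (fun z : ℝ => (c + |z|) ^ k * Real.exp (-z ^ 2 / 2)) atBot (nhds 0) := by
  have h := (tendPowTop k hc).comp tendsto_neg_atBot_atTop
  refine h.congr fun z => ?_
  simp [abs_neg, neg_sq]

noncomputable def gw (z : ℝ) : ℂ := Complex.exp (-(z : ℂ) ^ 2 / 2)

lemma gw_norm (z : ℝ) : ‖gw z‖ = Real.exp (-z ^ 2 / 2) := by
  have h : (-(z : ℂ) ^ 2 / 2) = (((-z ^ 2 / 2 : ℝ)) : ℂ) := by push_cast; ring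
  rw [gw, h, Complex.norm_exp, Complex.ofReal_re]

lemma gw_continuous : Continuous gw :=
  Complex.continuous_exp.comp (by continuity)

/-- The complex function whose restriction to ℝ is `z ↦ (y+zI)^k * gw z`. -/
noncomputable def Fc (y : ℝ) (k : ℕ) (w : ℂ) : ℂ :=
  ((y : ℂ) + w * Complex.I) ^ k * Complex.exp (-w ^ 2 / 2)

lemma Fc_hasDerivAt (y : ℝ) (k : ℕ) (w : ℂ) :
    HasDerivAt (Fc y k)
      (((k : ℂ) * ((y : ℂ) + w * Complex.I) ^ (k - 1) * Complex.I)
          * Complex.exp (-w ^ 2 / 2)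
        + ((y : ℂ) + w * Complex.I) ^ k * (-w * Complex.exp (-w ^ 2 / 2))) w := by
  have hbase : HasDerivAt (fun w : ℂ => (y : ℂ) + w * Complex.I) Complex.I w := by
    simpa using ((hasDerivAt_id w).mul_const Complex.I).const_add ((y : ℂ))
  have hexp : HasDerivAt (fun w : ℂ => Complex.exp (-w ^ 2 / 2))
      (-w * Complex.exp (-w ^ 2 / 2)) w := by
    have h2 : HasDerivAt (fun w : ℂ => -w ^ 2 / 2) (-w) w := by
      have := ((hasDerivAt_pow 2 w).neg).div_const 2
      simpa using this.congr_deriv (by push_cast; ring)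
    simpa [mul_comm] using h2.cexp
  exact (hbase.pow k).mul hexp

lemma norm_yzI (y z : ℝ) : ‖((y : ℂ) + (z : ℂ) * Complex.I)‖ ≤ |y| + |z| := by
  refine (norm_add_le _ _).trans ?_
  simp

lemma cont_yzI (y : ℝ) (k : ℕ) : Continuous fun z : ℝ => ((y : ℂ) + (z : ℂ) * Complex.I) ^ k := by
  continuity

lemma intMon (y : ℝ) (k : ℕ) :
    Integrable fun z : ℝ => ((y : ℂ) + (z : ℂ) * Complex.I) ^ k * gw z := by
  refine (intPow k (abs_nonneg y)).mono' ?_ (Eventually.of_forall fun z => ?_)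
  · exact ((cont_yzI y k).mul gw_continuous).aestronglyMeasurable
  · rw [norm_mul, gw_norm, norm_pow]
    exact mul_le_mul_of_nonneg_right
      (pow_le_pow_left₀ (norm_nonneg _) (norm_yzI y z) k) (Real.exp_pos _).le

lemma intMonZ (y : ℝ) (k : ℕ) :
    Integrable fun z : ℝ => (z : ℂ) * ((y : ℂ) + (z : ℂ) * Complex.I) ^ k * gw z := by
  refine (intPow (k + 1) (abs_nonneg y)).mono' ?_ (Eventually.of_forall fun z => ?_)
  · exact ((Complex.continuous_ofReal.mul (cont_yzI y k)).mul gw_continuous).aestronglyMeasurable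
  · rw [norm_mul, norm_mul, gw_norm]
    refine mul_le_mul_of_nonneg_right ?_ (Real.exp_pos _).le
    have h1 : ‖(z : ℂ)‖ ≤ |y| + |z| := by
      simp only [Complex.norm_real, Real.norm_eq_abs]
      linarith [abs_nonneg y]
    have h2 : ‖((y : ℂ) + (z : ℂ) * Complex.I) ^ k‖ ≤ (|y| + |z|) ^ k := by
      rw [norm_pow]; exact pow_le_pow_left₀ (norm_nonneg _) (norm_yzI y z) k
    calc ‖(z:ℂ)‖ * ‖((y : ℂ) + (z : ℂ) * Complex.I) ^ k‖
        ≤ (|y| + |z|) * (|y| + |z|) ^ k :=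
          mul_le_mul h1 h2 (norm_nonneg _) (by positivity)
      _ = (|y| + |z|) ^ (k + 1) := by ring

lemma tendMon (y : ℝ) (k : ℕ) (l : Filter ℝ)
    (hl : Tendsto (fun z : ℝ => (|y| + |z|) ^ k * Real.exp (-z ^ 2 / 2)) l (nhds 0)) :
    Tendsto (fun z : ℝ => ((y : ℂ) + (z : ℂ) * Complex.I) ^ k * gw z) l (nhds 0) := by
  rw [tendsto_zero_iff_norm_tendsto_zero]
  refine squeeze_zero (fun z => norm_nonneg _) (fun z => ?_) hl
  rw [norm_mul, gw_norm, norm_pow]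
  exact mul_le_mul_of_nonneg_right
    (pow_le_pow_left₀ (norm_nonneg _) (norm_yzI y z) k) (Real.exp_pos _).le

lemma ibp_gen (F G : ℝ → ℂ) (hd : ∀ x : ℝ, HasDerivAt F (G x) x) (hi : Integrable G)
    (ht : Tendsto F atTop (nhds 0)) (hb : Tendsto F atBot (nhds 0)) :
    ∫ z : ℝ, G z = 0 := by
  have h1 := integral_Ioi_of_hasDerivAt_of_tendsto' (a := (0:ℝ))
    (fun x _ => hd x) hi.integrableOn ht
  have h2 := integral_Iic_of_hasDerivAt_of_tendsto' (a := (0:ℝ))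
    (fun x _ => hd x) hi.integrableOn hb
  rw [← intervalIntegral.integral_Iic_add_Ioi (b := (0:ℝ)) hi.integrableOn hi.integrableOn,
    h1, h2]
  ring

lemma F_hasDerivAt (y : ℝ) (k : ℕ) (z : ℝ) :
    HasDerivAt (fun z : ℝ => ((y : ℂ) + (z : ℂ) * Complex.I) ^ k * gw z)
      (((k : ℂ) * ((y : ℂ) + (z : ℂ) * Complex.I) ^ (k - 1) * Complex.I) * gw z
        + ((y : ℂ) + (z : ℂ) * Complex.I) ^ k * ((-z : ℂ) * gw z)) z := by
  have := (Fc_hasDerivAt y k ((z : ℂ))).comp_ofReal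
  simpa [Fc, gw] using this

lemma gw_hasDerivAt (z : ℝ) : HasDerivAt gw ((-z : ℂ) * gw z) z := by
  have := F_hasDerivAt 0 0 z
  have h2 : gw = fun z : ℝ => Complex.exp (-(z:ℂ)^2/2) := rfl
  rw [h2]
  simpa [gw] using this

lemma zgw : ∫ z : ℝ, (z : ℂ) * gw z = 0 := by
  have hi0 : Integrable fun z : ℝ => (z : ℂ) * gw z := by
    have := intMonZ 0 0
    refine this.congr (Eventually.of_forall fun z => ?_)
    simp
  have h := ibp_gen gw (fun z => -((z : ℂ) * gw z))
    (fun x => by simpa [neg_mul, mul_comm] using gw_hasDerivAt x) hi0.neg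
    (by simpa using tendMon 0 0 atTop (by simpa using tendPowTop 0 (le_refl (0:ℝ))))
    (by simpa using tendMon 0 0 atBot (by simpa using tendPowBot 0 (le_refl (0:ℝ))))
  rw [integral_neg] at h
  exact neg_eq_zero.mp h

lemma zint (y : ℝ) (m : ℕ) :
    ∫ z : ℝ, (z : ℂ) * ((y : ℂ) + (z : ℂ) * Complex.I) ^ (m + 1) * gw z
      = ((m : ℂ) + 1) * Complex.I * ∫ z : ℝ, ((y : ℂ) + (z : ℂ) * Complex.I) ^ m * gw z := by
  set A : ℝ → ℂ := fun z => ((y : ℂ) + (z : ℂ) * Complex.I) with hA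
  have hG : ∀ z : ℝ, (((m : ℂ) + 1) * (A z) ^ m * Complex.I) * gw z
      + (A z) ^ (m + 1) * ((-z : ℂ) * gw z)
      = (((m : ℂ) + 1) * Complex.I) * ((A z) ^ m * gw z)
        - ((z : ℂ) * (A z) ^ (m + 1) * gw z) := by
    intro z; ring
  have hi1 := (intMon y m).const_mul (((m : ℂ) + 1) * Complex.I)
  have hi2 := intMonZ y (m + 1)
  have hi : Integrable (fun z : ℝ => (((m : ℂ) + 1) * Complex.I) * ((A z) ^ m * gw z)
      - ((z : ℂ) * (A z) ^ (m + 1) * gw z)) := hi1.sub hi2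
  have hd : ∀ x : ℝ, HasDerivAt (fun z : ℝ => (A z) ^ (m + 1) * gw z)
      ((((m : ℂ) + 1) * Complex.I) * ((A x) ^ m * gw x)
        - ((x : ℂ) * (A x) ^ (m + 1) * gw x)) x := by
    intro x
    have := F_hasDerivAt y (m + 1) x
    rw [show (m + 1 - 1) = m from rfl] at this
    convert this using 1
    push_cast
    rw [← hG x]
  have h0 := ibp_gen _ _ hd hi
    (tendMon y (m+1) atTop (tendPowTop (m+1) (abs_nonneg y)))
    (tendMon y (m+1) atBot (tendPowBot (m+1) (abs_nonneg y)))
  rw [integral_sub hi1 hi2, integral_const_mul, sub_eq_zero] at h0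
  exact h0.symm


noncomputable def Ic (y : ℝ) (n : ℕ) : ℂ :=
  ∫ z : ℝ, ((y : ℂ) + (z : ℂ) * Complex.I) ^ n * gw z

lemma intGw : Integrable gw := by
  have := intMon 0 0
  refine this.congr (Eventually.of_forall fun z => ?_)
  simp

lemma Ic0 (y : ℝ) : Ic y 0 = ((Real.sqrt (2 * π) : ℝ) : ℂ) := by
  have h1 : Ic y 0 = ∫ z : ℝ, Complex.exp (-(1/2 : ℂ) * (z : ℂ) ^ 2) := by
    rw [Ic]
    congr 1; funext z; rw [pow_zero, one_mul, gw]; congr 1; ring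
  rw [h1, integral_gaussian_complex (by norm_num : 0 < (1/2 : ℂ).re)]
  have h2 : ((π : ℂ) / (1/2)) = (((2 * π : ℝ)) : ℂ) := by push_cast; ring
  rw [h2, show ((1:ℂ)/2) = (((1/2 : ℝ)) : ℂ) by norm_num,
    ← Complex.ofReal_cpow (by positivity) (1/2 : ℝ), Complex.ofReal_inj,
    Real.sqrt_eq_rpow]

lemma Ic1 (y : ℝ) : Ic y 1 = (y : ℂ) * ((Real.sqrt (2 * π) : ℝ) : ℂ) := by
  have h1 : (fun z : ℝ => ((y : ℂ) + (z : ℂ) * Complex.I) ^ 1 * gw z)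
      = fun z : ℝ => (y : ℂ) * gw z + Complex.I * ((z : ℂ) * gw z) := by
    funext z; ring
  rw [Ic, h1, integral_add (intGw.const_mul _) ((by
      have := intMonZ 0 0
      refine this.congr (Eventually.of_forall fun z => ?_)
      simp : Integrable fun z : ℝ => (z : ℂ) * gw z).const_mul Complex.I),
    integral_const_mul, integral_const_mul, zgw]
  have := Ic0 y
  rw [Ic] at this
  simp only [pow_zero, one_mul] at this
  rw [this]
  ring

lemma Icrec (y : ℝ) (m : ℕ) :
    Ic y (m + 2) = (y : ℂ) * Ic y (m + 1) - ((m : ℂ) + 1) * Ic y m := by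
  have hsplit : (fun z : ℝ => ((y : ℂ) + (z : ℂ) * Complex.I) ^ (m + 2) * gw z)
      = fun z : ℝ => (y : ℂ) * (((y : ℂ) + (z : ℂ) * Complex.I) ^ (m + 1) * gw z)
        + Complex.I * ((z : ℂ) * ((y : ℂ) + (z : ℂ) * Complex.I) ^ (m + 1) * gw z) := by
    funext z; ring
  rw [Ic, hsplit, integral_add ((intMon y (m+1)).const_mul _) ((intMonZ y (m+1)).const_mul _),
    integral_const_mul, integral_const_mul, zint y m]
  have hB : (∫ z : ℝ, ((y : ℂ) + (z : ℂ) * Complex.I) ^ (m + 1) * gw z) = Ic y (m + 1) := rfl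
  have hC : (∫ z : ℝ, ((y : ℂ) + (z : ℂ) * Complex.I) ^ m * gw z) = Ic y m := rfl
  rw [hB, hC]
  have hI2 : (Complex.I : ℂ) ^ 2 = -1 := Complex.I_sq
  linear_combination (((m : ℂ) + 1) * Ic y m) * hI2

lemma Ic_eq_He (y : ℝ) : ∀ n : ℕ, Ic y n = ((He n y : ℝ) : ℂ) * ((Real.sqrt (2 * π) : ℝ) : ℂ) := by
  intro n
  induction n using Nat.strong_induction_on with
  | _ n ih =>
    match n with
    | 0 => simpa [He] using Ic0 y
    | 1 => simpa [He] using Ic1 y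
    | (m + 2) =>
      rw [Icrec y m, ih (m + 1) (by omega), ih m (by omega)]
      have : He (m + 2) y = y * He (m + 1) y - ((m : ℝ) + 1) * He m y := rfl
      rw [this]
      push_cast
      ring

section Main

variable {u : ℝ} (y : ℝ)

lemma usq_lt_one (hu0 : 0 ≤ u) (hu1 : u < 1) : u ^ 2 < 1 := by nlinarith

lemma keyIneq (hu0 : 0 ≤ u) (y a b : ℝ) :
    u * ((|y| + |a|) * (|y| + |b|)) + (-a ^ 2 / 2 + -b ^ 2 / 2)
      ≤ (u * y ^ 2 / 2 + ((u - 1) / 2 * a ^ 2 + u * |y| * |a|))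
        + (u * y ^ 2 / 2 + ((u - 1) / 2 * b ^ 2 + u * |y| * |b|)) := by
  nlinarith [mul_nonneg hu0 (sq_nonneg (|a| - |b|)), _root_.sq_abs y, _root_.sq_abs a, _root_.sq_abs b]

noncomputable def Gb (u y t : ℝ) : ℝ :=
  Real.exp (u * y ^ 2 / 2) * Real.exp ((u - 1) / 2 * t ^ 2 + u * |y| * |t|)

lemma Gb_int (hu1 : u < 1) : Integrable (Gb u y) := by
  have hb : (u - 1) / 2 < 0 := by linarith
  unfold Gb
  exact (intQuadAbs hb (u * |y|)).const_mul _

lemma Gb_prod_int (hu1 : u < 1) :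
    Integrable (fun p : ℝ × ℝ => Gb u y p.1 * Gb u y p.2) := by
  rw [show (volume : Measure (ℝ × ℝ)) = (volume : Measure ℝ).prod volume from
    (MeasureTheory.Measure.volume_eq_prod ℝ ℝ)]
  exact (Gb_int y hu1).mul_prod (Gb_int y hu1)

lemma expBound (hu0 : 0 ≤ u) (a b : ℝ) :
    Real.exp (u * ((|y| + |a|) * (|y| + |b|)))
      * (Real.exp (-a ^ 2 / 2) * Real.exp (-b ^ 2 / 2)) ≤ Gb u y a * Gb u y b := by
  simp only [Gb, ← Real.exp_add]
  exact Real.exp_le_exp.mpr (keyIneq hu0 y a b)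

lemma normAle (a : ℝ) : ‖((y : ℂ) + (a : ℂ) * Complex.I)‖ ≤ |y| + |a| := norm_yzI y a

lemma norm_uAA (hu0 : 0 ≤ u) (a b : ℝ) :
    ‖(u : ℂ) * ((y : ℂ) + (a : ℂ) * Complex.I) * ((y : ℂ) + (b : ℂ) * Complex.I)‖
      ≤ u * ((|y| + |a|) * (|y| + |b|)) := by
  rw [norm_mul, norm_mul, Complex.norm_real, Real.norm_eq_abs, _root_.abs_of_nonneg hu0,
    mul_assoc]
  refine mul_le_mul_of_nonneg_left ?_ hu0
  exact mul_le_mul (normAle y a) (normAle y b) (norm_nonneg _) (by positivity)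

lemma f_norm (a b : ℝ) :
    ‖Complex.exp ((u : ℂ) * ((y : ℂ) + (a : ℂ) * Complex.I) * ((y : ℂ) + (b : ℂ) * Complex.I))
      * (gw a * gw b)‖
      = Real.exp (((u : ℂ) * ((y : ℂ) + (a : ℂ) * Complex.I)
          * ((y : ℂ) + (b : ℂ) * Complex.I)).re)
        * (Real.exp (-a ^ 2 / 2) * Real.exp (-b ^ 2 / 2)) := by
  rw [norm_mul, norm_mul, gw_norm, gw_norm, Complex.norm_exp]

lemma f_int (hu0 : 0 ≤ u) (hu1 : u < 1) :
    Integrable (fun p : ℝ × ℝ =>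
      Complex.exp ((u : ℂ) * ((y : ℂ) + (p.1 : ℂ) * Complex.I)
          * ((y : ℂ) + (p.2 : ℂ) * Complex.I)) * (gw p.1 * gw p.2)) := by
  refine (Gb_prod_int y hu1).mono' ?_ (Eventually.of_forall fun p => ?_)
  · refine Continuous.aestronglyMeasurable ?_
    refine (Complex.continuous_exp.comp (by continuity)).mul ?_
    exact ((gw_continuous.comp continuous_fst).mul (gw_continuous.comp continuous_snd))
  · rw [f_norm]
    refine le_trans ?_ (expBound y hu0 p.1 p.2)
    refine mul_le_mul_of_nonneg_right ?_ (by positivity)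
    refine Real.exp_le_exp.mpr ?_
    exact (Complex.re_le_norm _).trans (norm_uAA y hu0 p.1 p.2)

end Main

section Gauss

variable {u : ℝ} (y : ℝ)

lemma inner_eq (u y a : ℝ) :
    (∫ b : ℝ, Complex.exp ((u : ℂ) * ((y : ℂ) + (a : ℂ) * Complex.I)
        * ((y : ℂ) + (b : ℂ) * Complex.I)) * (gw a * gw b))
      = ((π : ℂ) / (1/2 : ℂ)) ^ (1/2 : ℂ)
        * Complex.exp ((((u^2-1)/2 : ℝ) : ℂ) * (a:ℂ)^2
            + ((u*y*(1-u) : ℝ) : ℂ) * Complex.I * (a:ℂ)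
            + ((u*y^2 - u^2*y^2/2 : ℝ) : ℂ)) := by
  have h1 : (fun b : ℝ => Complex.exp ((u : ℂ) * ((y : ℂ) + (a : ℂ) * Complex.I)
        * ((y : ℂ) + (b : ℂ) * Complex.I)) * (gw a * gw b))
      = fun b : ℝ => Complex.exp ((-(1/2) : ℂ) * (b:ℂ)^2
          + ((u : ℂ) * ((y : ℂ) + (a : ℂ) * Complex.I) * Complex.I) * (b:ℂ)
          + ((u : ℂ) * ((y : ℂ) + (a : ℂ) * Complex.I) * (y:ℂ) + (-(a:ℂ)^2/2))) := by
    funext b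
    rw [gw, gw, ← Complex.exp_add, ← Complex.exp_add]
    congr 1
    ring
  rw [h1, integral_cexp_quadratic (by norm_num : (-(1/2) : ℂ).re < 0)]
  congr 1
  · norm_num
  · congr 1
    have hI := Complex.I_sq
    push_cast
    linear_combination (((u:ℂ)^2 * ((y:ℂ) + (a:ℂ)*Complex.I)^2 - (u:ℂ)^2 * (a:ℂ)^2) / 2) * hI
  
lemma double_int (hu0 : 0 ≤ u) (hu1 : u < 1) :
    (∫ p : ℝ × ℝ, Complex.exp ((u : ℂ) * ((y : ℂ) + (p.1 : ℂ) * Complex.I)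
        * ((y : ℂ) + (p.2 : ℂ) * Complex.I)) * (gw p.1 * gw p.2))
      = ((Real.sqrt (2*π) : ℝ) : ℂ) * ((Real.sqrt (2*π/(1-u^2)) : ℝ) : ℂ)
          * Complex.exp (((u*y^2/(1+u) : ℝ) : ℂ)) := by
  have hint := f_int y hu0 hu1
  rw [MeasureTheory.Measure.volume_eq_prod ℝ ℝ] at hint ⊢
  rw [MeasureTheory.integral_prod _ hint]
  have h2 : (fun a : ℝ => ∫ b : ℝ, Complex.exp ((u : ℂ) * ((y : ℂ) + (a : ℂ) * Complex.I)
        * ((y : ℂ) + (b : ℂ) * Complex.I)) * (gw a * gw b))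
      = fun a : ℝ => ((π : ℂ) / (1/2 : ℂ)) ^ (1/2 : ℂ)
        * Complex.exp ((((u^2-1)/2 : ℝ) : ℂ) * (a:ℂ)^2
            + ((u*y*(1-u) : ℝ) : ℂ) * Complex.I * (a:ℂ)
            + ((u*y^2 - u^2*y^2/2 : ℝ) : ℂ)) := funext fun a => inner_eq u y a
  rw [h2, MeasureTheory.integral_const_mul]
  have husq : u^2 < 1 := usq_lt_one hu0 hu1
  have hbre : ((((u^2-1)/2 : ℝ) : ℂ)).re < 0 := by
    rw [Complex.ofReal_re]; linarith
  rw [integral_cexp_quadratic hbre]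
  -- now pure algebra with cpow and cexp
  have h1u : (0:ℝ) < 1 - u^2 := by linarith
  have h1pu : (0:ℝ) < 1 + u := by linarith
  have e1 : ((π : ℂ) / (1/2 : ℂ)) = (((2*π : ℝ)) : ℂ) := by push_cast; ring
  have e2 : ((π : ℂ) / -(((u^2-1)/2 : ℝ) : ℂ)) = (((2*π/(1-u^2) : ℝ)) : ℂ) := by
    push_cast
    have hne : (1:ℂ) - (u:ℂ)^2 ≠ 0 := by exact_mod_cast h1u.ne'
    have hne' : (u:ℂ)^2 - 1 ≠ 0 := fun h => hne (by linear_combination -h)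
    field_simp
    ring
  have e3 : ((((2*π : ℝ)) : ℂ)) ^ (1/2 : ℂ) = ((Real.sqrt (2*π) : ℝ) : ℂ) := by
    rw [show ((1:ℂ)/2) = (((1/2 : ℝ)) : ℂ) by norm_num,
      ← Complex.ofReal_cpow (by positivity) (1/2 : ℝ), Complex.ofReal_inj,
      Real.sqrt_eq_rpow]
  have e4 : ((((2*π/(1-u^2) : ℝ)) : ℂ)) ^ (1/2 : ℂ) = ((Real.sqrt (2*π/(1-u^2)) : ℝ) : ℂ) := by
    rw [show ((1:ℂ)/2) = (((1/2 : ℝ)) : ℂ) by norm_num,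
      ← Complex.ofReal_cpow (by positivity) (1/2 : ℝ), Complex.ofReal_inj,
      Real.sqrt_eq_rpow]
  have e5 : (((u*y^2 - u^2*y^2/2 : ℝ) : ℂ))
      - (((u*y*(1-u) : ℝ) : ℂ) * Complex.I)^2 / (4 * (((u^2-1)/2 : ℝ) : ℂ))
      = (((u*y^2/(1+u) : ℝ) : ℂ)) := by
    have h1pc : ((1:ℂ)+(u:ℂ)) ≠ 0 := by
      intro h
      have : ((1 + u : ℝ) : ℂ) = 0 := by push_cast; linear_combination h
      rw [Complex.ofReal_eq_zero] at this
      linarith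
    have hu2c : ((u:ℂ)^2 - 1) ≠ 0 := by
      intro h
      have : ((u^2 - 1 : ℝ) : ℂ) = 0 := by push_cast; linear_combination h
      rw [Complex.ofReal_eq_zero] at this
      linarith
    rw [mul_pow, Complex.I_sq]
    push_cast
    field_simp
    ring
  rw [e1, e2, e3, e4, e5]
  ring

end Gauss

section DCT

lemma term_hasSum (y u : ℝ) (hu0 : 0 ≤ u) (hu1 : u < 1) :
    HasSum (fun n : ℕ => ∫ p : ℝ × ℝ,
        ((u:ℂ) * ((y:ℂ) + (p.1:ℂ) * Complex.I) * ((y:ℂ) + (p.2:ℂ) * Complex.I)) ^ n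
          / (n.factorial : ℂ) * (gw p.1 * gw p.2))
      (∫ p : ℝ × ℝ, Complex.exp ((u:ℂ) * ((y:ℂ) + (p.1:ℂ) * Complex.I)
          * ((y:ℂ) + (p.2:ℂ) * Complex.I)) * (gw p.1 * gw p.2)) := by
  set x : ℝ × ℝ → ℝ := fun p => u * ((|y| + |p.1|) * (|y| + |p.2|)) with hx
  set K : ℝ × ℝ → ℝ := fun p => Real.exp (-p.1 ^ 2 / 2) * Real.exp (-p.2 ^ 2 / 2) with hK
  have hxnn : ∀ p : ℝ × ℝ, 0 ≤ x p := fun p => by positivity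
  have hKnn : ∀ p : ℝ × ℝ, 0 ≤ K p := fun p => by positivity
  apply MeasureTheory.hasSum_integral_of_dominated_convergence
    (bound := fun n p => x p ^ n / n.factorial * K p)
  · intro n
    refine Continuous.aestronglyMeasurable ?_
    refine Continuous.mul ?_ ?_
    · exact (continuous_pow n).comp (by fun_prop) |>.div_const _
    · exact ((gw_continuous.comp continuous_fst).mul (gw_continuous.comp continuous_snd))
  · intro n
    refine Eventually.of_forall fun p => ?_
    have e1 : ‖gw p.1 * gw p.2‖ = K p := by rw [norm_mul, gw_norm, gw_norm]
    have e2 : ‖((u:ℂ) * ((y:ℂ) + (p.1:ℂ) * Complex.I) * ((y:ℂ) + (p.2:ℂ) * Complex.I)) ^ n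
        / (n.factorial : ℂ)‖
        = ‖(u:ℂ) * ((y:ℂ) + (p.1:ℂ) * Complex.I) * ((y:ℂ) + (p.2:ℂ) * Complex.I)‖ ^ n
          / n.factorial := by
      rw [norm_div, norm_pow, Complex.norm_natCast]
    rw [norm_mul, e1, e2]
    refine mul_le_mul_of_nonneg_right ?_ (hKnn p)
    refine (div_le_div_iff_of_pos_right (by positivity)).mpr ?_
    exact pow_le_pow_left₀ (norm_nonneg _) (norm_uAA y hu0 p.1 p.2) n
  · refine Eventually.of_forall fun p => ?_
    exact (Real.summable_pow_div_factorial (x p)).mul_right _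
  · have hts : (fun p : ℝ × ℝ => ∑' n : ℕ, x p ^ n / n.factorial * K p)
        = fun p => Real.exp (x p) * K p := by
      funext p
      rw [tsum_mul_right]
      congr 1
      rw [(NormedSpace.expSeries_div_hasSum_exp (x p)).tsum_eq, ← Real.exp_eq_exp_ℝ]
    rw [hts]
    refine (Gb_prod_int y hu1).mono' ?_ (Eventually.of_forall fun p => ?_)
    · refine Continuous.aestronglyMeasurable ?_
      have hxc : Continuous x := by
        rw [hx]; fun_prop
      have hKc : Continuous K := by
        rw [hK]; fun_prop
      exact (Real.continuous_exp.comp hxc).mul hKc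
    · rw [Real.norm_eq_abs, _root_.abs_of_nonneg (by positivity)]
      exact expBound y hu0 p.1 p.2
  · refine Eventually.of_forall fun p => ?_
    have h := (NormedSpace.expSeries_div_hasSum_exp
      ((u:ℂ) * ((y:ℂ) + (p.1:ℂ) * Complex.I) * ((y:ℂ) + (p.2:ℂ) * Complex.I))).mul_right
      (gw p.1 * gw p.2)
    rw [← Complex.exp_eq_exp_ℂ] at h
    exact h

end DCT

lemma Fn_int (y u : ℝ) (n : ℕ) :
    (∫ p : ℝ × ℝ,
        ((u:ℂ) * ((y:ℂ) + (p.1:ℂ) * Complex.I) * ((y:ℂ) + (p.2:ℂ) * Complex.I)) ^ n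
          / (n.factorial : ℂ) * (gw p.1 * gw p.2))
      = (u:ℂ) ^ n / (n.factorial : ℂ) * (Ic y n * Ic y n) := by
  rw [MeasureTheory.Measure.volume_eq_prod ℝ ℝ]
  set f1 : ℝ → ℂ := fun z =>
    (u:ℂ) ^ n / (n.factorial : ℂ) * (((y:ℂ) + (z:ℂ) * Complex.I) ^ n * gw z) with hf1
  set f2 : ℝ → ℂ := fun z => ((y:ℂ) + (z:ℂ) * Complex.I) ^ n * gw z with hf2
  have h1 : (fun p : ℝ × ℝ =>
      ((u:ℂ) * ((y:ℂ) + (p.1:ℂ) * Complex.I) * ((y:ℂ) + (p.2:ℂ) * Complex.I)) ^ n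
        / (n.factorial : ℂ) * (gw p.1 * gw p.2))
      = fun p : ℝ × ℝ => f1 p.1 * f2 p.2 := by
    funext p
    rw [hf1, hf2]
    simp only []
    rw [mul_pow, mul_pow]
    ring
  rw [h1, MeasureTheory.integral_prod_mul f1 f2, hf1, hf2,
    MeasureTheory.integral_const_mul]
  rw [show (∫ z : ℝ, ((y:ℂ) + (z:ℂ) * Complex.I) ^ n * gw z) = Ic y n from rfl]
  ring

theorem mehler_diag (y u : ℝ) (hu0 : 0 ≤ u) (hu1 : u < 1) :
    HasSum (fun a : ℕ => (He a y) ^ 2 * u ^ a / (a.factorial : ℝ))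
      ((1 - u ^ 2) ^ (-(1 : ℝ) / 2) * Real.exp (u * y ^ 2 / (1 + u))) := by
  have husq : u ^ 2 < 1 := usq_lt_one hu0 hu1
  have h1u : (0:ℝ) < 1 - u ^ 2 := by linarith
  have h2pi : (0:ℝ) < 2 * π := by positivity
  have hmain := term_hasSum y u hu0 hu1
  rw [double_int y hu0 hu1] at hmain
  have hterm : ∀ n : ℕ,
      (∫ p : ℝ × ℝ,
        ((u:ℂ) * ((y:ℂ) + (p.1:ℂ) * Complex.I) * ((y:ℂ) + (p.2:ℂ) * Complex.I)) ^ n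
          / (n.factorial : ℂ) * (gw p.1 * gw p.2))
      = (((He n y) ^ 2 * u ^ n / (n.factorial : ℝ) * (2 * π) : ℝ) : ℂ) := by
    intro n
    rw [Fn_int y u n, Ic_eq_He y n]
    have hs : ((Real.sqrt (2*π) : ℝ) : ℂ) ^ 2 = 2 * (π : ℂ) := by
      rw [← Complex.ofReal_pow, Real.sq_sqrt h2pi.le]
      push_cast
      ring
    push_cast
    linear_combination ((u:ℂ) ^ n / (n.factorial : ℂ) * ((He n y : ℝ) : ℂ) ^ 2) * hs
  rw [funext hterm] at hmain
  have hS : ((Real.sqrt (2*π) : ℝ) : ℂ) * ((Real.sqrt (2*π/(1-u^2)) : ℝ) : ℂ)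
      * Complex.exp (((u*y^2/(1+u) : ℝ) : ℂ))
      = (((Real.sqrt (2*π) * Real.sqrt (2*π/(1-u^2)) * Real.exp (u*y^2/(1+u)) : ℝ)) : ℂ) := by
    rw [← Complex.ofReal_exp]
    push_cast
    ring
  rw [hS] at hmain
  have hreal : HasSum (fun n : ℕ => (He n y) ^ 2 * u ^ n / (n.factorial : ℝ) * (2 * π))
      (Real.sqrt (2*π) * Real.sqrt (2*π/(1-u^2)) * Real.exp (u*y^2/(1+u))) :=
    Complex.hasSum_ofReal.mp hmain
  have hdiv := hreal.div_const (2 * π)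
  have hsq : Real.sqrt (1 - u^2) ≠ 0 := by positivity
  have heq1 : (fun n : ℕ => (He n y) ^ 2 * u ^ n / (n.factorial : ℝ) * (2 * π) / (2 * π))
      = fun n : ℕ => (He n y) ^ 2 * u ^ n / (n.factorial : ℝ) := by
    funext n
    field_simp
  have hprod : Real.sqrt (2*π) * Real.sqrt (2*π/(1-u^2)) = 2*π / Real.sqrt (1-u^2) := by
    rw [← Real.sqrt_mul h2pi.le, show 2*π*(2*π/(1-u^2)) = (2*π)^2/(1-u^2) by ring,
      Real.sqrt_div (by positivity) _, Real.sqrt_sq h2pi.le]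
  have heq2 : Real.sqrt (2*π) * Real.sqrt (2*π/(1-u^2)) * Real.exp (u*y^2/(1+u)) / (2*π)
      = (1 - u ^ 2) ^ (-(1 : ℝ) / 2) * Real.exp (u * y ^ 2 / (1 + u)) := by
    rw [hprod]
    rw [show (-(1:ℝ)/2) = -(1/2 : ℝ) by norm_num, Real.rpow_neg h1u.le, ← Real.sqrt_eq_rpow]
    field_simp
  rw [heq1, heq2] at hdiv
  exact hdiv

/-- diagonal case of Mehler's formula. -/
theorem stmt6 (y u : ℝ) (hu0 : 0 ≤ u) (hu1 : u < 1) :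
    HasSum (fun a : ℕ => (He a y) ^ 2 * u ^ a / (a.factorial : ℝ))
      ((1 - u ^ 2) ^ (-(1 : ℝ) / 2) * Real.exp (u * y ^ 2 / (1 + u))) :=
  mehler_diag y u hu0 hu1
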